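/- arXiv:2405.09500 — 2 statements merged into one kernel-verified Lean document; each statement's English description precedes it below -/
import Mathlib

section
/- Let C be a nonempty finite set and p_*, p^* nonnegative measures on C with p_*(A) ≤ p^*(A) for all A ⊆ C and 0 < p_*(C) < 1 < p^*(C). Set β = p^*(C) - 1 and define ν(K) = max{p_*(K), p^*(K) - β} for K ⊆ C. Then ν is a convex capacity on C and core(ν) = {p ∈ Δ(C) : p_*(A) ≤ p(A) ≤ p^*(A) for all A ⊆ C}, provided p_* and p^* are additive measures. -/
open Finset

variable {X : Type*} [Fintype X] [DecidableEq X]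

/-- Total mass of `p` on a finite subset `K`. -/
def mass (p : X → ℝ) (K : Finset X) : ℝ := ∑ a ∈ K, p a

/-- `p` is a probability mass function on `X`. -/
def IsProb (p : X → ℝ) : Prop := (∀ a, 0 ≤ p a) ∧ ∑ a, p a = 1

/-- A capacity on the finite set `X`: normalized and monotone set function. -/
def IsCapacity (ν : Finset X → ℝ) : Prop :=
  ν ∅ = 0 ∧ ν Finset.univ = 1 ∧ ∀ ⦃A B : Finset X⦄, A ⊆ B → ν A ≤ ν B

/-- A convex (supermodular) capacity. -/
def IsConvexCap (ν : Finset X → ℝ) : Prop :=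
  IsCapacity ν ∧ ∀ A B : Finset X, ν A + ν B ≤ ν (A ∪ B) + ν (A ∩ B)

/-- The core of a capacity: all dominating probability measures. -/
def core (ν : Finset X → ℝ) : Set (X → ℝ) :=
  {p | IsProb p ∧ ∀ K : Finset X, ν K ≤ mass p K}
lemma mass_mono {p : X → ℝ} (hp : ∀ a, 0 ≤ p a) {A B : Finset X} (h : A ⊆ B) :
    mass p A ≤ mass p B :=
  Finset.sum_le_sum_of_subset_of_nonneg h (fun i _ _ => hp i)

lemma mass_modular (p : X → ℝ) (A B : Finset X) :
    mass p (A ∪ B) + mass p (A ∩ B) = mass p A + mass p B :=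
  Finset.sum_union_inter

lemma mass_compl (p : X → ℝ) (A : Finset X) :
    mass p A + mass p Aᶜ = mass p Finset.univ := by
  simpa [mass] using Finset.sum_add_sum_compl A p

/-- Interval beliefs: the capacity max{p₋(K), p⁺(K) − β} is convex with core equal
to the set of probabilities lying between the two measures. Here the ambient
finite set is the type X (playing the role of C). -/
theorem stmt8 [Nonempty X] (pst pstar : X → ℝ)
    (hst : ∀ a, 0 ≤ pst a) (hstar : ∀ a, 0 ≤ pstar a)
    (hle : ∀ A : Finset X, mass pst A ≤ mass pstar A)
    (h0 : 0 < mass pst Finset.univ) (h1 : mass pst Finset.univ < 1)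
    (h2 : 1 < mass pstar Finset.univ) (ν : Finset X → ℝ)
    (hν : ∀ K : Finset X,
      ν K = max (mass pst K) (mass pstar K - (mass pstar Finset.univ - 1))) :
    IsConvexCap ν ∧
      core ν = {p | IsProb p ∧
        ∀ A : Finset X, mass pst A ≤ mass p A ∧ mass p A ≤ mass pstar A} := by
  have hβ : 0 < mass pstar Finset.univ - 1 := by linarith
  have hempty : mass pst (∅ : Finset X) = 0 := by simp [mass]
  have hemptys : mass pstar (∅ : Finset X) = 0 := by simp [mass]
  constructor
  · refine ⟨⟨?_, ?_, ?_⟩, ?_⟩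
    · rw [hν, hempty, hemptys, max_eq_left (by linarith)]
    · rw [hν, max_eq_right (by linarith)]; linarith
    · intro A B hAB
      rw [hν, hν]
      exact max_le_max (mass_mono hst hAB)
        (by linarith [mass_mono hstar hAB])
    · intro A B
      rw [hν A, hν B, hν (A ∪ B), hν (A ∩ B)]
      have hmst := mass_modular pst A B
      have hmstar := mass_modular pstar A B
      -- key cross inequality: pst A + pstar B ≤ pstar (A∪B) + pst (A∩B)
      have key : ∀ S T : Finset X, mass pst S + mass pstar T ≤
          mass pstar (S ∪ T) + mass pst (S ∩ T) := by
        intro S T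
        have h1' : mass pst S = mass pst (S \ T) + mass pst (S ∩ T) := by
          rw [mass, mass, mass, ← Finset.sum_union (Finset.disjoint_sdiff_inter S T),
            Finset.sdiff_union_inter]
        have h2' : mass pstar (S ∪ T) = mass pstar T + mass pstar (S \ T) := by
          rw [mass, mass, mass, ← Finset.sum_union Finset.sdiff_disjoint.symm,
            Finset.union_sdiff_self_eq_union]
          rw [Finset.union_comm]
        have := hle (S \ T)
        linarith
      rcases max_cases (mass pst A) (mass pstar A - (mass pstar Finset.univ - 1)) with
        ⟨hA, _⟩ | ⟨hA, _⟩ <;>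
      rcases max_cases (mass pst B) (mass pstar B - (mass pstar Finset.univ - 1)) with
        ⟨hB, _⟩ | ⟨hB, _⟩ <;> rw [hA, hB]
      · calc mass pst A + mass pst B = mass pst (A ∪ B) + mass pst (A ∩ B) := hmst.symm
          _ ≤ _ := add_le_add (le_max_left _ _) (le_max_left _ _)
      · have := key A B
        have := le_max_right (mass pst (A ∪ B)) (mass pstar (A ∪ B) - (mass pstar Finset.univ - 1))
        have := le_max_left (mass pst (A ∩ B)) (mass pstar (A ∩ B) - (mass pstar Finset.univ - 1))
        linarith
      · have := key B A
        have := le_max_right (mass pst (A ∪ B)) (mass pstar (A ∪ B) - (mass pstar Finset.univ - 1))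
        have := le_max_left (mass pst (A ∩ B)) (mass pstar (A ∩ B) - (mass pstar Finset.univ - 1))
        rw [Finset.union_comm B A, Finset.inter_comm B A] at *
        linarith
      · have := le_max_right (mass pst (A ∪ B)) (mass pstar (A ∪ B) - (mass pstar Finset.univ - 1))
        have := le_max_right (mass pst (A ∩ B)) (mass pstar (A ∩ B) - (mass pstar Finset.univ - 1))
        linarith
  · ext p
    simp only [core, Set.mem_setOf_eq]
    constructor
    · rintro ⟨hp, h⟩
      refine ⟨hp, fun A => ?_⟩
      have hAlo := (hν A ▸ h A)
      have hAc := (hν Aᶜ ▸ h Aᶜ)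
      have hpc : mass p A + mass p Aᶜ = 1 := by
        rw [mass_compl]; exact hp.2
      have hsc := mass_compl pstar A
      constructor
      · exact le_trans (le_max_left _ _) hAlo
      · have := le_trans (le_max_right _ _) hAc
        linarith
    · rintro ⟨hp, h⟩
      refine ⟨hp, fun K => ?_⟩
      rw [hν]
      have hpc : mass p K + mass p Kᶜ = 1 := by
        rw [mass_compl]; exact hp.2
      have hsc := mass_compl pstar K
      have h1 := (h K).1
      have h2 := (h Kᶜ).2
      exact max_le h1 (by linarith)
end

section
/- In the updating model with Ψ = {ψ^κ : κ ∈ 𝒦} a finite set of updating rules indexed by biases κ, and experiments 𝒫_{ψ^κ} = core(ν^κ) with ν^κ(K) = (1−κ)ν(K−{x⁰}) + κ1_{x⁰∈K} for a fixed convex capacity ν: a probability measure Q on Ψ rationalizes λ if and only if for all K ⊆ X, λ(K) ≥ (1−κ_Q)ν(K−{x⁰}) + κ_Q·1_{x⁰∈K}, where κ_Q = Σ_κ Q(ψ^κ)κ is the average bias. Consequently, whether Q rationalizes λ depends only on κ_Q. -/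
open Finset

variable {X : Type*} [Fintype X] [DecidableEq X]

/-- Q rationalizes λ in the updating model. -/
def RatUpd {G : Type*} [Fintype G] {I : Type*} [Fintype I]
    (νκ : I → Finset G → ℝ) (Q : I → ℝ) (lam : G → ℝ) : Prop :=
  ∃ ρ : I → G → ℝ, (∀ i, ρ i ∈ core (νκ i)) ∧ ∀ x, lam x = ∑ i, Q i * ρ i x

lemma core_nonempty {X : Type*} [Fintype X] [DecidableEq X] (w : Finset X → ℝ)
    (hw : IsConvexCap w) : ∃ p : X → ℝ, p ∈ core w := by
  classical
  obtain ⟨⟨h0, h1, hmono⟩, hsup⟩ := hw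
  set n := Fintype.card X with hn
  set e : X ≃ Fin n := Fintype.equivFin X with he
  set T : ℕ → Finset X := fun k => univ.filter (fun x => (e x : ℕ) < k) with hT
  set p : X → ℝ := fun x => w (T ((e x : ℕ) + 1)) - w (T (e x)) with hp
  have hT0 : T 0 = ∅ := by simp [hT]
  have hTn : T n = univ := by
    ext x; simp [hT, (e x).isLt]
  have hTsub : ∀ k, T k ⊆ T (k + 1) := by
    intro k x hx
    simp [hT] at hx ⊢; omega
  have hmem : ∀ x k, x ∈ T (k+1) ↔ ((e x : ℕ) = k ∨ x ∈ T k) := by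
    intro x k; simp [hT]; omega
  have hpnn : ∀ x, 0 ≤ p x := fun x => sub_nonneg.2 (hmono (hTsub _))
  -- key induction
  have key : ∀ k, ∀ K : Finset X, K ⊆ T k → w K ≤ mass p K := by
    intro k
    induction k with
    | zero =>
      intro K hK
      rw [hT0] at hK
      rw [Finset.subset_empty.mp hK]
      simp [mass, h0]
    | succ k ih =>
      intro K hK
      by_cases hx : ∃ x ∈ K, (e x : ℕ) = k
      · obtain ⟨x, hxK, hxk⟩ := hx
        have hxT : x ∉ T k := by simp [hT, hxk]
        have hK' : K.erase x ⊆ T k := by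
          intro y hy
          have hyK := Finset.mem_of_mem_erase hy
          have := hK hyK
          rcases (hmem y k).1 this with h | h
          · exact absurd (e.injective (Fin.ext (h.trans hxk.symm))) (Finset.ne_of_mem_erase hy)
          · exact h
        have hKT : K ∪ T k = T (k+1) := by
          apply Finset.Subset.antisymm
          · exact Finset.union_subset hK (hTsub k)
          · intro y hy
            rcases (hmem y k).1 hy with h | h
            · have : y = x := e.injective (Fin.ext (h.trans hxk.symm))
              exact Finset.mem_union_left _ (this ▸ hxK)
            · exact Finset.mem_union_right _ h
        have hKI : K ∩ T k = K.erase x := by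
          ext y
          simp only [Finset.mem_inter, Finset.mem_erase]
          constructor
          · rintro ⟨h1', h2'⟩
            refine ⟨fun hyx => hxT (hyx ▸ h2'), h1'⟩
          · rintro ⟨h1', h2'⟩
            refine ⟨h2', ?_⟩
            rcases (hmem y k).1 (hK h2') with h | h
            · exact absurd (e.injective (Fin.ext (h.trans hxk.symm))) h1'
            · exact h
        have hs := hsup K (T k)
        rw [hKT, hKI] at hs
        have ihK := ih (K.erase x) hK'
        have hmass : mass p K = p x + mass p (K.erase x) := by
          rw [mass, mass, ← Finset.add_sum_erase _ _ hxK]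
        have hpx : p x = w (T (k+1)) - w (T k) := by rw [hp]; simp [hxk]
        rw [hmass, hpx]
        linarith
      · push_neg at hx
        have : K ⊆ T k := by
          intro y hy
          rcases (hmem y k).1 (hK hy) with h | h
          · exact absurd h (hx y hy)
          · exact h
        exact ih K this
  refine ⟨p, ⟨⟨hpnn, ?_⟩, fun K => key n K (by rw [hTn]; exact Finset.subset_univ K)⟩⟩
  have : ∑ x, p x = ∑ j : Fin n, (w (T ((j : ℕ) + 1)) - w (T (j : ℕ))) := by
    rw [← Equiv.sum_comp e (fun j => w (T ((j : ℕ) + 1)) - w (T (j : ℕ)))]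
  rw [this, Fin.sum_univ_eq_sum_range (fun j => w (T (j + 1)) - w (T j)) n,
    Finset.sum_range_sub (fun j => w (T j)) n, hT0, hTn, h0, h1, sub_zero]

lemma sum_mix {I : Type*} [Fintype I] (Q κ : I → ℝ) (hQ : ∑ i, Q i = 1) (A B : ℝ) :
    ∑ i, Q i * ((1 - κ i) * A + κ i * B) = (1 - ∑ i, Q i * κ i) * A + (∑ i, Q i * κ i) * B := by
  have h : ∀ i, Q i * ((1 - κ i) * A + κ i * B)
      = Q i * A - (Q i * κ i) * A + (Q i * κ i) * B := fun i => by ring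
  simp_rw [h]
  rw [Finset.sum_add_distrib, Finset.sum_sub_distrib, ← Finset.sum_mul, ← Finset.sum_mul,
    ← Finset.sum_mul, hQ]
  ring

lemma nut_convex {G : Type*} [AddCommGroup G] [Fintype G] [DecidableEq G]
    (x0 : G) (ν : Finset G → ℝ) (hν : IsConvexCap ν) :
    IsConvexCap (fun K : Finset G => ν (K.image (fun x => x - x0))) := by
  obtain ⟨⟨h0, h1, hmono⟩, hsup⟩ := hν
  have hinj : Function.Injective (fun x : G => x - x0) := sub_left_injective
  refine ⟨⟨by simpa using h0, ?_, fun A B hAB => hmono (Finset.image_subset_image hAB)⟩, ?_⟩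
  · have huniv : (Finset.univ.image (fun x : G => x - x0)) = Finset.univ := by
      apply Finset.image_univ_of_surjective
      intro y; exact ⟨y + x0, by simp⟩
    show ν (Finset.univ.image (fun x : G => x - x0)) = 1
    rw [huniv]; exact h1
  · intro A B
    have hu : (A ∪ B).image (fun x : G => x - x0)
        = A.image (fun x => x - x0) ∪ B.image (fun x => x - x0) := Finset.image_union _ _
    have hi : (A ∩ B).image (fun x : G => x - x0)
        = A.image (fun x => x - x0) ∩ B.image (fun x => x - x0) :=
      Finset.image_inter _ _ hinj
    simpa [hu, hi] using hsup (A.image (fun x => x - x0)) (B.image (fun x => x - x0))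

lemma key_iff {G : Type*} [AddCommGroup G] [Fintype G] [DecidableEq G]
    (x0 : G) (ν : Finset G → ℝ) (hν : IsConvexCap ν)
    {I : Type*} [Fintype I] (κ : I → ℝ) (hκ : ∀ i, κ i ∈ Set.Icc (0:ℝ) 1)
    (νκ : I → Finset G → ℝ)
    (hνκ : ∀ i (K : Finset G), νκ i K =
      (1 - κ i) * ν (K.image (fun x => x - x0)) + κ i * (if x0 ∈ K then 1 else 0))
    (lam : G → ℝ) (hlam : IsProb lam) (Q : I → ℝ) (hQ : IsProb Q) :
    RatUpd νκ Q lam ↔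
      ∀ K : Finset G,
        (1 - ∑ i, Q i * κ i) * ν (K.image (fun x => x - x0)) +
          (∑ i, Q i * κ i) * (if x0 ∈ K then 1 else 0) ≤ mass lam K := by
  classical
  set nut : Finset G → ℝ := fun K => ν (K.image (fun x => x - x0)) with hnut
  set c : ℝ := ∑ i, Q i * κ i with hc
  have hnutconv : IsConvexCap nut := nut_convex x0 ν hν
  have hnut0 : ∀ K : Finset G, 0 ≤ nut K := fun K => by
    have := hnutconv.1.2.2 (Finset.empty_subset K)
    rw [hnutconv.1.1] at this; exact this
  set δ : G → ℝ := fun x => if x = x0 then (1:ℝ) else 0 with hδ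
  have hδmass : ∀ K : Finset G, mass δ K = (if x0 ∈ K then 1 else 0) := by
    intro K; rw [mass, hδ]; exact Finset.sum_ite_eq' K x0 (fun _ => 1)
  have hδnn : ∀ x, 0 ≤ δ x := fun x => by rw [hδ]; positivity
  have hc0 : 0 ≤ c := Finset.sum_nonneg fun i _ => mul_nonneg (hQ.1 i) (hκ i).1
  have hc1 : c ≤ 1 := by
    rw [hc, ← hQ.2]
    exact Finset.sum_le_sum fun i _ => by
      nlinarith [hQ.1 i, (hκ i).1, (hκ i).2]
  constructor
  · rintro ⟨ρ, hρ, hsum⟩ K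
    have h1 : mass lam K = ∑ i, Q i * mass (ρ i) K := by
      simp only [mass, hsum, Finset.mul_sum]
      rw [Finset.sum_comm]
    have h2 : ∀ i, Q i * νκ i K ≤ Q i * mass (ρ i) K := fun i =>
      mul_le_mul_of_nonneg_left ((hρ i).2 K) (hQ.1 i)
    have h3 : ∑ i, Q i * νκ i K
        = (1 - c) * nut K + c * (if x0 ∈ K then 1 else 0) := by
      simp_rw [hνκ]
      exact sum_mix Q κ hQ.2 _ _
    calc (1 - c) * nut K + c * (if x0 ∈ K then 1 else 0)
        = ∑ i, Q i * νκ i K := h3.symm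
      _ ≤ ∑ i, Q i * mass (ρ i) K := Finset.sum_le_sum fun i _ => h2 i
      _ = mass lam K := h1.symm
  · intro h
    obtain ⟨μ0, hμ0⟩ := core_nonempty nut hnutconv
    have hx0 : c ≤ lam x0 := by
      have h1 := h {x0}
      simp only [Finset.mem_singleton, if_pos rfl, if_true] at h1
      have hm : mass lam {x0} = lam x0 := by simp [mass]
      rw [hm] at h1
      have hn : (0:ℝ) ≤ ν (Finset.image (fun x => x - x0) {x0}) := hnut0 {x0}
      nlinarith [hn, h1, hc1]
    set μ : G → ℝ := if c = 1 then μ0 else fun x => (lam x - c * δ x) / (1 - c) with hμ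
    have hlamδ : c = 1 → ∀ x, lam x = δ x := by
      intro hce x
      have hl1 : lam x0 = 1 := by
        have hle : lam x0 ≤ 1 := by
          rw [← hlam.2]
          exact Finset.single_le_sum (fun a _ => hlam.1 a) (Finset.mem_univ x0)
        linarith [hce ▸ hx0]
      by_cases hx : x = x0
      · subst hx; simp [hδ, hl1]
      · have hle0 : lam x ≤ 0 := by
          have hsub : ({x0, x} : Finset G) ⊆ Finset.univ := Finset.subset_univ _
          have := Finset.sum_le_sum_of_subset_of_nonneg hsub (fun a _ _ => hlam.1 a)
          rw [Finset.sum_pair (Ne.symm hx), hlam.2] at this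
          linarith
        simp only [hδ, if_neg hx]
        linarith [hlam.1 x]
    have hB : ∀ x, lam x = (1 - c) * μ x + c * δ x := by
      intro x
      by_cases hce : c = 1
      · rw [hce, hlamδ hce x]; ring
      · rw [hμ, if_neg hce]
        have : (1 : ℝ) - c ≠ 0 := by intro h'; apply hce; linarith
        field_simp
        ring
    have hμnn : ∀ x, 0 ≤ μ x := by
      intro x
      by_cases hce : c = 1
      · rw [hμ, if_pos hce]; exact hμ0.1.1 x
      · rw [hμ, if_neg hce]
        have hpos : (0:ℝ) < 1 - c := lt_of_le_of_ne (by linarith) (fun h' => hce (by linarith))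
        apply div_nonneg _ (le_of_lt hpos)
        by_cases hx : x = x0
        · subst hx; simp only [hδ, if_pos rfl]; linarith
        · simp only [hδ, if_neg hx]; simp; linarith [hlam.1 x]
    have hμsum : ∑ x, μ x = 1 := by
      by_cases hce : c = 1
      · rw [hμ, if_pos hce]; exact hμ0.1.2
      · rw [hμ, if_neg hce]
        have hne : (1 : ℝ) - c ≠ 0 := by intro h'; apply hce; linarith
        rw [← Finset.sum_div, Finset.sum_sub_distrib, hlam.2, ← Finset.mul_sum]
        have : ∑ x, δ x = 1 := by
          have := hδmass Finset.univ
          rw [mass] at this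
          simpa using this
        rw [this]
        field_simp
    have hμcore : ∀ K, nut K ≤ mass μ K := by
      intro K
      by_cases hce : c = 1
      · rw [hμ, if_pos hce]; exact hμ0.2 K
      · rw [hμ, if_neg hce]
        have hpos : (0:ℝ) < 1 - c := lt_of_le_of_ne (by linarith) (fun h' => hce (by linarith))
        have hmK : mass (fun x => (lam x - c * δ x) / (1 - c)) K
            = (mass lam K - c * mass δ K) / (1 - c) := by
          simp only [mass]
          rw [← Finset.sum_div, Finset.sum_sub_distrib, ← Finset.mul_sum]
        rw [hmK, le_div_iff₀ hpos, hδmass]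
        linarith [h K]
    refine ⟨fun i x => (1 - κ i) * μ x + κ i * δ x, fun i => ⟨⟨fun x => ?_, ?_⟩, fun K => ?_⟩, fun x => ?_⟩
    · exact add_nonneg (mul_nonneg (by linarith [(hκ i).2]) (hμnn x))
        (mul_nonneg (hκ i).1 (hδnn x))
    · simp only []
      rw [Finset.sum_add_distrib, ← Finset.mul_sum, ← Finset.mul_sum, hμsum]
      have : ∑ x, δ x = 1 := by
        have := hδmass Finset.univ
        rw [mass] at this
        simpa using this
      rw [this]; ring
    · rw [hνκ]
      have hm : mass (fun x => (1 - κ i) * μ x + κ i * δ x) K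
          = (1 - κ i) * mass μ K + κ i * mass δ K := by
        simp only [mass]
        rw [Finset.sum_add_distrib, ← Finset.mul_sum, ← Finset.mul_sum]
      rw [hm, hδmass]
      have h1 := hμcore K
      have h2 := (hκ i).1; have h3 := (hκ i).2
      nlinarith
    · rw [hB x]
      have : ∑ i, Q i * ((1 - κ i) * μ x + κ i * δ x)
          = (1 - c) * μ x + c * δ x := sum_mix Q κ hQ.2 _ _
      rw [this]

/-- Rationalizability in the updating model holds iff the inequalities with the
average bias κ_Q hold; consequently rationalizability depends only on κ_Q. -/
theorem stmt17 {G : Type*} [AddCommGroup G] [Fintype G] [DecidableEq G]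
    (x0 : G) (ν : Finset G → ℝ) (hν : IsConvexCap ν)
    {I : Type*} [Fintype I] (κ : I → ℝ) (hκ : ∀ i, κ i ∈ Set.Icc (0:ℝ) 1)
    (νκ : I → Finset G → ℝ)
    (hνκ : ∀ i (K : Finset G), νκ i K =
      (1 - κ i) * ν (K.image (fun x => x - x0)) + κ i * (if x0 ∈ K then 1 else 0))
    (lam : G → ℝ) (hlam : IsProb lam) (Q : I → ℝ) (hQ : IsProb Q) :
    (RatUpd νκ Q lam ↔
      ∀ K : Finset G,
        (1 - ∑ i, Q i * κ i) * ν (K.image (fun x => x - x0)) +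
          (∑ i, Q i * κ i) * (if x0 ∈ K then 1 else 0) ≤ mass lam K) ∧
    (∀ Q' : I → ℝ, IsProb Q' → (∑ i, Q' i * κ i) = (∑ i, Q i * κ i) →
      (RatUpd νκ Q lam ↔ RatUpd νκ Q' lam)) := by
  constructor
  · exact key_iff x0 ν hν κ hκ νκ hνκ lam hlam Q hQ
  · intro Q' hQ' heq
    rw [key_iff x0 ν hν κ hκ νκ hνκ lam hlam Q hQ,
      key_iff x0 ν hν κ hκ νκ hνκ lam hlam Q' hQ', heq]
end
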